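/- Let M1 ∈ R^(p×q), M2 ∈ R^(q×q) symmetric positive semidefinite with (I − M2^+ M2) M1^T = 0, and X ∈ R^(p×p) symmetric positive semidefinite. Then the infimum of tr([[0,M1],[M1^T,M2]]·[[0,U1],[U1^T,U2]]) = 2 tr(M1 U1^T) + tr(M2 U2) over all (U1,U2) such that [[X,U1],[U1^T,U2]] ⪰ 0 equals −tr(M1 M2^+ M1^T X), and is attained by U1 = −X M1 M2^+, U2 = M2^+ M1^T X M1 M2^+. -/

import Mathlib

open Matrix
open scoped MatrixOrder in
theorem Matrix.posSemidef_iff_eq_transpose_mul_self {n : Type*} [Fintype n] [DecidableEq n]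
    {A : Matrix n n ℝ} : A.PosSemidef ↔ ∃ B : Matrix n n ℝ, A = Bᴴ * B := by
  constructor
  · intro hA
    obtain ⟨X, hX, -, hXA⟩ :=
        CFC.exists_sqrt_of_isSelfAdjoint_of_quasispectrumRestricts hA.isHermitian
          (QuasispectrumRestricts.nnreal_of_nonneg hA.nonneg)
    refine ⟨X, ?_⟩
    rw [← hXA, conjTranspose_eq_transpose_of_trivial]
    have : Xᵀ = X := hX.star_eq
    rw [this]
  · rintro ⟨B, rfl⟩
    exact posSemidef_conjTranspose_mul_self B

lemma auxPSDBlockTL {p q : ℕ} {Y : Matrix (Fin p) (Fin p) ℝ} (hY : Y.PosSemidef) :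
    (fromBlocks Y 0 0 (0 : Matrix (Fin q) (Fin q) ℝ)).PosSemidef := by
  obtain ⟨B, hB⟩ := posSemidef_iff_eq_transpose_mul_self.mp hY
  rw [conjTranspose_eq_transpose_of_trivial] at hB
  have h : fromBlocks Y 0 0 (0 : Matrix (Fin q) (Fin q) ℝ)
      = (fromBlocks B 0 0 (0 : Matrix (Fin q) (Fin q) ℝ))ᵀ
        * (fromBlocks B 0 0 (0 : Matrix (Fin q) (Fin q) ℝ)) := by
    simp [fromBlocks_transpose, fromBlocks_multiply, hB]
  rw [h, ← conjTranspose_eq_transpose_of_trivial]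
  exact posSemidef_conjTranspose_mul_self _

lemma auxPSDBlockBR {p q : ℕ} {Y : Matrix (Fin q) (Fin q) ℝ} (hY : Y.PosSemidef) :
    (fromBlocks (0 : Matrix (Fin p) (Fin p) ℝ) 0 0 Y).PosSemidef := by
  obtain ⟨B, hB⟩ := posSemidef_iff_eq_transpose_mul_self.mp hY
  rw [conjTranspose_eq_transpose_of_trivial] at hB
  have h : fromBlocks (0 : Matrix (Fin p) (Fin p) ℝ) 0 0 Y
      = (fromBlocks (0 : Matrix (Fin p) (Fin p) ℝ) 0 0 B)ᵀ
        * (fromBlocks (0 : Matrix (Fin p) (Fin p) ℝ) 0 0 B) := by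
    simp [fromBlocks_transpose, fromBlocks_multiply, hB]
  rw [h, ← conjTranspose_eq_transpose_of_trivial]
  exact posSemidef_conjTranspose_mul_self _
open Matrix

lemma auxTraceFromBlocks {p q : ℕ} (A : Matrix (Fin p) (Fin p) ℝ)
    (B : Matrix (Fin p) (Fin q) ℝ) (C : Matrix (Fin q) (Fin p) ℝ)
    (D : Matrix (Fin q) (Fin q) ℝ) :
    (fromBlocks A B C D).trace = A.trace + D.trace := by
  simp [Matrix.trace, Fintype.sum_sum_type, fromBlocks, Matrix.diag]

lemma auxTraceTransposeMulSelf {m n : Type*} [Fintype m] [Fintype n]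
    (M : Matrix m n ℝ) : 0 ≤ (Mᵀ * M).trace := by
  simp only [Matrix.trace, Matrix.diag, Matrix.mul_apply, Matrix.transpose_apply]
  apply Finset.sum_nonneg
  intro j _
  apply Finset.sum_nonneg
  intro i _
  exact mul_self_nonneg _

lemma auxTraceMulPSD {n : Type*} [Fintype n] [DecidableEq n]
    {A B : Matrix n n ℝ} (hA : A.PosSemidef) (hB : B.PosSemidef) :
    0 ≤ (A * B).trace := by
  obtain ⟨C, hC⟩ := posSemidef_iff_eq_transpose_mul_self.mp hA
  obtain ⟨D, hD⟩ := posSemidef_iff_eq_transpose_mul_self.mp hB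
  rw [conjTranspose_eq_transpose_of_trivial] at hC hD
  subst hC hD
  have key : (Cᵀ * C * (Dᵀ * D)).trace = ((D * Cᵀ)ᵀ * (D * Cᵀ)).trace := by
    rw [show Cᵀ * C * (Dᵀ * D) = Cᵀ * (C * (Dᵀ * D)) from by rw [Matrix.mul_assoc],
      trace_mul_comm]
    simp [Matrix.transpose_mul, Matrix.mul_assoc]
  rw [key]
  exact auxTraceTransposeMulSelf _

lemma auxMPUnique {n : Type*} [Fintype n] [DecidableEq n]
    (A B C : Matrix n n ℝ)
    (h1 : A * B * A = A) (h2 : B * A * B = B)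
    (h3 : (A * B)ᵀ = A * B) (h4 : (B * A)ᵀ = B * A)
    (k1 : A * C * A = A) (k2 : C * A * C = C)
    (k3 : (A * C)ᵀ = A * C) (k4 : (C * A)ᵀ = C * A) : B = C := by
  have hAB : A * B = A * C := by
    calc A * B = (A * B)ᵀ := h3.symm
    _ = (A * C * A * B)ᵀ := by rw [k1]
    _ = (A * B)ᵀ * (A * C)ᵀ := by simp [Matrix.transpose_mul, Matrix.mul_assoc]
    _ = (A * B) * (A * C) := by rw [h3, k3]
    _ = (A * B * A) * C := by simp [Matrix.mul_assoc]
    _ = A * C := by rw [h1]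
  have hBA : B * A = C * A := by
    calc B * A = (B * A)ᵀ := h4.symm
    _ = (B * (A * C * A))ᵀ := by rw [k1]
    _ = (C * A)ᵀ * (B * A)ᵀ := by simp [Matrix.transpose_mul, Matrix.mul_assoc]
    _ = (C * A) * (B * A) := by rw [h4, k4]
    _ = C * (A * B * A) := by simp [Matrix.mul_assoc]
    _ = C * A := by rw [h1]
  calc B = B * A * B := h2.symm
  _ = C * A * B := by rw [hBA]
  _ = C * (A * B) := by rw [Matrix.mul_assoc]
  _ = C * (A * C) := by rw [hAB]
  _ = C := by rw [← Matrix.mul_assoc, k2]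

/-- the infimum of `2 tr(M1 U1ᵀ) + tr(M2 U2)` over `(U1,U2)` with
`[[X,U1],[U1ᵀ,U2]] ⪰ 0` equals `−tr(M1 M2⁺ M1ᵀ X)`, attained at `U1 = −X M1 M2⁺`,
`U2 = M2⁺ M1ᵀ X M1 M2⁺`. -/
theorem stmt5 {p q : ℕ} (M1 : Matrix (Fin p) (Fin q) ℝ) (M2 : Matrix (Fin q) (Fin q) ℝ)
    (hM2 : M2.PosSemidef)
    (M2p : Matrix (Fin q) (Fin q) ℝ)
    (hp1 : M2 * M2p * M2 = M2) (hp2 : M2p * M2 * M2p = M2p)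
    (hp3 : (M2 * M2p)ᵀ = M2 * M2p) (hp4 : (M2p * M2)ᵀ = M2p * M2)
    (hrange : M1ᵀ - M2p * M2 * M1ᵀ = 0)
    (X : Matrix (Fin p) (Fin p) ℝ) (hX : X.PosSemidef) :
    IsLeast {y : ℝ | ∃ (U1 : Matrix (Fin p) (Fin q) ℝ) (U2 : Matrix (Fin q) (Fin q) ℝ),
        (fromBlocks X U1 U1ᵀ U2).PosSemidef ∧
        y = 2 * (M1 * U1ᵀ).trace + (M2 * U2).trace}
      (-(M1 * M2p * M1ᵀ * X).trace) ∧
    ((fromBlocks X (-(X * M1 * M2p)) (-(X * M1 * M2p))ᵀ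
        (M2p * M1ᵀ * X * M1 * M2p)).PosSemidef ∧
      2 * (M1 * (-(X * M1 * M2p))ᵀ).trace + (M2 * (M2p * M1ᵀ * X * M1 * M2p)).trace
        = -(M1 * M2p * M1ᵀ * X).trace) := by
  have hM2t : M2ᵀ = M2 := by
    have h := hM2.isHermitian
    rwa [IsHermitian, conjTranspose_eq_transpose_of_trivial] at h
  have hXt : Xᵀ = X := by
    have h := hX.isHermitian
    rwa [IsHermitian, conjTranspose_eq_transpose_of_trivial] at h
  -- transpose of M2p is also an MP inverse, hence M2p is symmetric
  have hh1 : M2 * M2pᵀ * M2 = M2 := by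
    have h := congrArg Matrix.transpose hp1
    simpa [Matrix.transpose_mul, hM2t, Matrix.mul_assoc] using h
  have hh2 : M2pᵀ * M2 * M2pᵀ = M2pᵀ := by
    have h := congrArg Matrix.transpose hp2
    simpa [Matrix.transpose_mul, hM2t, Matrix.mul_assoc] using h
  have e34 : M2 * M2pᵀ = M2p * M2 := by
    calc M2 * M2pᵀ = M2ᵀ * M2pᵀ := by rw [hM2t]
    _ = (M2p * M2)ᵀ := (Matrix.transpose_mul _ _).symm
    _ = M2p * M2 := hp4
  have e43 : M2pᵀ * M2 = M2 * M2p := by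
    calc M2pᵀ * M2 = M2pᵀ * M2ᵀ := by rw [hM2t]
    _ = (M2 * M2p)ᵀ := (Matrix.transpose_mul _ _).symm
    _ = M2 * M2p := hp3
  have hh3 : (M2 * M2pᵀ)ᵀ = M2 * M2pᵀ := by rw [e34, hp4]
  have hh4 : (M2pᵀ * M2)ᵀ = M2pᵀ * M2 := by rw [e43, hp3]
  have hPt : M2pᵀ = M2p := auxMPUnique M2 M2pᵀ M2p hh1 hh2 hh3 hh4 hp1 hp2 hp3 hp4
  have hcomm : M2 * M2p = M2p * M2 := by rw [← hPt, e34, hPt]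
  have hM1 : M1 * M2p * M2 = M1 := by
    have h0 : M1ᵀ = M2p * M2 * M1ᵀ := sub_eq_zero.mp hrange
    have h := congrArg Matrix.transpose h0.symm
    simpa [Matrix.transpose_mul, hM2t, hPt, hcomm, Matrix.mul_assoc] using h
  set A : Matrix (Fin p) (Fin q) ℝ := M1 * M2p with hA
  have hA1 : A * M2 = M1 := hM1
  have hA2 : M2 * Aᵀ = M1ᵀ := by
    calc M2 * Aᵀ = M2ᵀ * Aᵀ := by rw [hM2t]
    _ = (A * M2)ᵀ := (Matrix.transpose_mul _ _).symm
    _ = M1ᵀ := by rw [hA1]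
  have hAt : Aᵀ = M2p * M1ᵀ := by rw [hA, Matrix.transpose_mul, hPt]
  -- attained point is feasible
  have hkey : fromBlocks X (-(X * M1 * M2p)) (-(X * M1 * M2p))ᵀ
      (M2p * M1ᵀ * X * M1 * M2p)
      = (fromBlocks 1 (-A) 0 1)ᵀ
        * (fromBlocks X 0 0 (0 : Matrix (Fin q) (Fin q) ℝ))
        * (fromBlocks 1 (-A) 0 1) := by
    simp [fromBlocks_transpose, fromBlocks_multiply, hA, Matrix.transpose_mul,
      Matrix.transpose_neg, hXt, hPt, Matrix.mul_assoc]
  have hAttPSD : (fromBlocks X (-(X * M1 * M2p)) (-(X * M1 * M2p))ᵀ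
      (M2p * M1ᵀ * X * M1 * M2p)).PosSemidef := by
    rw [hkey]
    have h := (auxPSDBlockTL (q := q) hX).conjTranspose_mul_mul_same
      ((fromBlocks 1 (-A) 0 1 : Matrix (Fin p ⊕ Fin q) (Fin p ⊕ Fin q) ℝ))
    rwa [conjTranspose_eq_transpose_of_trivial] at h
  -- value at the attained point
  have hAttVal : 2 * (M1 * (-(X * M1 * M2p))ᵀ).trace
      + (M2 * (M2p * M1ᵀ * X * M1 * M2p)).trace
      = -(M1 * M2p * M1ᵀ * X).trace := by
    have t1 : M1 * (-(X * M1 * M2p))ᵀ = -(M1 * M2p * M1ᵀ * X) := by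
      simp [Matrix.transpose_mul, Matrix.transpose_neg, hXt, hPt, Matrix.mul_assoc]
    have t2 : (M2 * (M2p * M1ᵀ * X * M1 * M2p)).trace
        = (M1 * M2p * M1ᵀ * X).trace := by
      rw [show M2 * (M2p * M1ᵀ * X * M1 * M2p)
          = (M2 * M2p * M1ᵀ * X * M1) * M2p from by simp [Matrix.mul_assoc],
        trace_mul_comm,
        show M2p * (M2 * M2p * M1ᵀ * X * M1)
          = (M2p * M2 * M2p) * (M1ᵀ * X * M1) from by simp [Matrix.mul_assoc],
        hp2,
        show M2p * (M1ᵀ * X * M1) = (M2p * M1ᵀ * X) * M1 from by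
          simp [Matrix.mul_assoc],
        trace_mul_comm]
      congr 1
      simp [Matrix.mul_assoc]
    rw [t1, trace_neg, t2]
    ring
  refine ⟨⟨⟨-(X * M1 * M2p), M2p * M1ᵀ * X * M1 * M2p, hAttPSD, hAttVal.symm⟩, ?_⟩,
    hAttPSD, hAttVal⟩
  rintro y ⟨U1, U2, hU, rfl⟩
  -- lower bound via trace pairing with a PSD matrix
  have hkeyW : fromBlocks (A * M2 * Aᵀ) (A * M2) (M2 * Aᵀ) M2
      = (fromBlocks 1 0 Aᵀ 1)ᵀ
        * (fromBlocks (0 : Matrix (Fin p) (Fin p) ℝ) 0 0 M2)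
        * (fromBlocks 1 0 Aᵀ 1) := by
    simp [fromBlocks_transpose, fromBlocks_multiply, Matrix.mul_assoc]
  have hWPSD : (fromBlocks (A * M2 * Aᵀ) (A * M2) (M2 * Aᵀ) M2).PosSemidef := by
    rw [hkeyW]
    have h := (auxPSDBlockBR (p := p) hM2).conjTranspose_mul_mul_same
      ((fromBlocks 1 0 Aᵀ 1 : Matrix (Fin p ⊕ Fin q) (Fin p ⊕ Fin q) ℝ))
    rwa [conjTranspose_eq_transpose_of_trivial] at h
  have htr := auxTraceMulPSD hU hWPSD
  rw [fromBlocks_multiply, auxTraceFromBlocks] at htr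
  rw [hA1, hA2] at htr
  rw [Matrix.trace_add, Matrix.trace_add] at htr
  have e1 : (X * (M1 * Aᵀ)).trace = (M1 * M2p * M1ᵀ * X).trace := by
    rw [trace_mul_comm]
    congr 1
    rw [hAt]
    simp [Matrix.mul_assoc]
  have e2 : (U1 * M1ᵀ).trace = (M1 * U1ᵀ).trace := by
    rw [← Matrix.trace_transpose (U1 * M1ᵀ), Matrix.transpose_mul,
      Matrix.transpose_transpose]
  have e3 : (U1ᵀ * M1).trace = (M1 * U1ᵀ).trace := trace_mul_comm _ _
  have e4 : (U2 * M2).trace = (M2 * U2).trace := trace_mul_comm _ _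
  rw [e1, e2, e3, e4] at htr
  linarith
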